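/- Let E be a finite simple ring (with 1, not the zero ring). Then there exist a natural number l ≥ 1 and a finite field F such that E is isomorphic as a ring to the algebra of l × l matrices over F. -/

import Mathlib

private theorem wb_map_atom {R M N : Type*} [Ring R] [AddCommGroup M] [Module R M]
    [AddCommGroup N] [Module R N] (f : M →ₗ[R] N) {m : Submodule R M}
    (hm : IsAtom m) : m.map f = ⊥ ∨ IsAtom (m.map f) := by
  by_cases h : m.map f = ⊥
  · exact Or.inl h
  refine Or.inr ⟨h, fun b hb => ?_⟩
  have hc : Submodule.comap f b ⊓ m = ⊥ := by
    rcases hm.le_iff.mp inf_le_right with h' | h'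
    · exact h'
    · exact absurd ((Submodule.map_le_iff_le_comap.mpr (le_inf_iff.mp h'.ge).1)) hb.not_ge
  rw [eq_bot_iff]
  intro x hx
  obtain ⟨z, hz, rfl⟩ := hb.le hx
  have : z ∈ Submodule.comap f b ⊓ m := ⟨hx, hz⟩
  rw [hc] at this
  rw [Submodule.mem_bot] at this; simp [this]

/-- A nonzero left ideal of a simple ring that is closed under right multiplication is all. -/
private theorem wb_leftideal_eq_top (E : Type*) [Ring E] [IsSimpleRing E] (S : Submodule E E)
    (hmulr : ∀ {x y : E}, x ∈ S → x * y ∈ S) (hne : S ≠ ⊥) : S = ⊤ := by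
  let I : TwoSidedIdeal E := TwoSidedIdeal.mk' S S.zero_mem
    (fun ha hb => S.add_mem ha hb) (fun ha => S.neg_mem ha)
    (fun {x y} hy => by simpa [smul_eq_mul] using S.smul_mem x hy)
    (fun {x y} hx => hmulr hx)
  obtain ⟨x, hx, hx0⟩ := Submodule.ne_bot_iff S |>.mp hne
  have h1 : (1 : E) ∈ I := IsSimpleRing.one_mem_of_ne_zero_mem I hx0
    (by rwa [TwoSidedIdeal.mem_mk'])
  rw [TwoSidedIdeal.mem_mk'] at h1
  rw [Submodule.eq_top_iff']
  intro z
  simpa [smul_eq_mul] using S.smul_mem z h1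

private theorem wb_semisimple (E : Type*) [Ring E] [Finite E] [IsSimpleRing E] :
    IsSemisimpleRing E := by
  have hfin : Finite (Submodule E E) := Finite.of_injective _ SetLike.coe_injective
  set S : Submodule E E := sSup {m | IsAtom m} with hS
  have hmulr : ∀ {x y : E}, x ∈ S → x * y ∈ S := by
    intro x y hx
    have hmap : Submodule.map (LinearMap.toSpanSingleton E E y) S ≤ S := by
      rw [hS, (Submodule.gc_map_comap (LinearMap.toSpanSingleton E E y)).l_sSup]
      apply iSup₂_le
      intro m hm
      rcases wb_map_atom (LinearMap.toSpanSingleton E E y) hm with h | h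
      · rw [h]; exact bot_le
      · exact le_sSup h
    exact hmap ⟨x, hx, by simp [LinearMap.toSpanSingleton_apply, smul_eq_mul]⟩
  obtain ⟨m, hm⟩ := IsAtomic.exists_atom (Submodule E E)
  have hne : S ≠ ⊥ := fun h => hm.1 (le_bot_iff.mp (h ▸ le_sSup hm))
  have hStop : S = ⊤ := wb_leftideal_eq_top E S hmulr hne
  refine IsSemisimpleModule.of_sSup_simples_eq_top ?_
  rw [← hStop, hS]
  congr 1
  ext m
  exact isSimpleModule_iff_isAtom

/-- any two minimal left ideals of a simple ring (with complemented lattice) are isomorphic -/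
private theorem wb_atoms_iso (E : Type*) [Ring E] [Finite E] [IsSimpleRing E]
    {m n : Submodule E E} (hm : IsAtom m) (hn : IsAtom n) :
    Nonempty (↥m ≃ₗ[E] ↥n) := by
  haveI := wb_semisimple E
  set T : Submodule E E := ⨆ y : E, m.map (LinearMap.toSpanSingleton E E y) with hT
  have hTtop : T = ⊤ := by
    apply wb_leftideal_eq_top
    · intro x y hx
      have hmap : T.map (LinearMap.toSpanSingleton E E y) ≤ T := by
        rw [hT, Submodule.map_iSup]
        apply iSup_le; intro z
        rw [← Submodule.map_comp]
        have hco : (LinearMap.toSpanSingleton E E y).comp (LinearMap.toSpanSingleton E E z)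
            = LinearMap.toSpanSingleton E E (z * y) := by
          ext; simp [LinearMap.toSpanSingleton_apply, smul_eq_mul, mul_assoc]
        rw [hco]
        exact le_iSup (fun y : E => m.map (LinearMap.toSpanSingleton E E y)) (z * y)
      exact hmap ⟨x, hx, by simp [LinearMap.toSpanSingleton_apply, smul_eq_mul]⟩
    · intro h
      have h1 : m.map (LinearMap.toSpanSingleton E E 1) ≤ T := le_iSup (fun y : E => m.map (LinearMap.toSpanSingleton E E y)) 1
      have hid : LinearMap.toSpanSingleton E E 1 = LinearMap.id := by
        ext; simp [LinearMap.toSpanSingleton_apply]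
      rw [hid, Submodule.map_id] at h1
      exact hm.1 (le_bot_iff.mp (h ▸ h1))
  obtain ⟨P, hP⟩ := exists_isCompl n
  set π := n.projectionOnto P hP with hπdef
  have hex : ∃ y : E, ¬ m.map (LinearMap.toSpanSingleton E E y) ≤ LinearMap.ker π := by
    by_contra hall
    push_neg at hall
    have hk : T ≤ LinearMap.ker π := by rw [hT]; exact iSup_le hall
    rw [hTtop, top_le_iff] at hk
    obtain ⟨x, hxn, hx0⟩ := n.ne_bot_iff.mp hn.1
    have hz : π x = 0 := by rw [← LinearMap.mem_ker, hk]; trivial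
    rw [Submodule.projectionOnto_apply_left hP ⟨x, hxn⟩] at hz
    exact hx0 (by simpa [Subtype.ext_iff] using hz)
  obtain ⟨y, hy⟩ := hex
  set g : ↥m →ₗ[E] ↥n := π ∘ₗ (LinearMap.toSpanSingleton E E y) ∘ₗ m.subtype with hg
  have hgne : g ≠ 0 := by
    obtain ⟨w, hwmem, hwk⟩ := SetLike.not_le_iff_exists.mp hy
    obtain ⟨z, hz, rfl⟩ := hwmem
    intro h0
    apply hwk
    rw [LinearMap.mem_ker]
    have := congrFun (congrArg DFunLike.coe h0) ⟨z, hz⟩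
    simpa [hg] using this
  haveI : IsSimpleModule E ↥m := isSimpleModule_iff_isAtom.mpr hm
  haveI : IsSimpleModule E ↥n := isSimpleModule_iff_isAtom.mpr hn
  exact ⟨LinearEquiv.ofBijective g (g.bijective_of_ne_zero hgne)⟩

/-- conjugation by a linear equivalence as ring equivalence of endomorphism rings -/
private def wb_endCongr {R M N : Type*} [Ring R] [AddCommGroup M] [Module R M]
    [AddCommGroup N] [Module R N] (e : M ≃ₗ[R] N) :
    Module.End R M ≃+* Module.End R N where
  toFun f := e.toLinearMap ∘ₗ f ∘ₗ e.symm.toLinearMap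
  invFun g := e.symm.toLinearMap ∘ₗ g ∘ₗ e.toLinearMap
  left_inv f := by ext x; simp
  right_inv g := by ext x; simp
  map_add' f g := by ext x; simp
  map_mul' f g := by ext x; simp [Module.End.mul_apply]

private theorem wb_final {X : Type*} [Field X] [Finite X] {E' : Type*} [Ring E'] (n : ℕ)
    (g : E' ≃+* Matrix (Fin n) (Fin n) X) :
    ∃ (F : Type) (_ : Field F) (_ : Finite F), Nonempty (E' ≃+* Matrix (Fin n) (Fin n) F) := by
  haveI : Small.{0} X := Countable.toSmall _
  refine ⟨Shrink.{0} X, inferInstance, Finite.of_equiv _ (equivShrink _), ?_⟩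
  exact ⟨g.trans (RingEquiv.mapMatrix (Shrink.ringEquiv X).symm)⟩

/-- Wedderburn: a finite simple ring is isomorphic to a matrix algebra `Mat_{l×l}(F)`,
`l ≥ 1`, over a finite field `F`. -/
theorem finite_simple_ring_is_matrix_ring (E : Type*) [Ring E] [Finite E]
    [IsSimpleRing E] :
    ∃ (l : ℕ) (F : Type) (_ : Field F) (_ : Finite F),
      1 ≤ l ∧ Nonempty (E ≃+* Matrix (Fin l) (Fin l) F) := by
  classical
  haveI := wb_semisimple E
  haveI hfin : Finite (Submodule E E) := Finite.of_injective _ SetLike.coe_injective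
  obtain ⟨s, hindep, hstop, hsimple⟩ :=
    IsSemisimpleModule.exists_sSupIndep_sSup_simples_eq_top E E
  haveI : Fintype s := (Set.toFinite s).fintype
  have hne : s.Nonempty := by
    rcases Set.eq_empty_or_nonempty s with h | h
    · exfalso
      rw [h, sSup_empty] at hstop
      exact bot_ne_top (α := Submodule E E) hstop
    · exact h
  obtain ⟨M, hMs⟩ := hne
  have hM : IsAtom M := isSimpleModule_iff_isAtom.mp (hsimple M hMs)
  haveI : IsSimpleModule E ↥M := hsimple M hMs
  -- internal direct sum decomposition
  have hsup : ⨆ i : s, (i : Submodule E E) = ⊤ := by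
    rw [← sSup_eq_iSup']; exact hstop
  have hindep' : iSupIndep ((↑) : s → Submodule E E) := (sSupIndep_iff s).mp hindep
  have internal : DirectSum.IsInternal (fun i : s => (i : Submodule E E)) :=
    DirectSum.isInternal_submodule_of_iSupIndep_of_iSup_eq_top hindep' hsup
  set n := Fintype.card s with hn
  have hn1 : 1 ≤ n := Fintype.card_pos_iff.mpr ⟨⟨M, hMs⟩⟩
  -- linear equivalence E ≃ (Fin n → M)
  have iso : ∀ i : s, ↥(i : Submodule E E) ≃ₗ[E] ↥M := fun i =>
    Classical.choice (wb_atoms_iso E (isSimpleModule_iff_isAtom.mp (hsimple i i.2)) hM)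
  let e1 : (DirectSum s (fun i => ↥(i : Submodule E E))) ≃ₗ[E] E :=
    LinearEquiv.ofBijective (DirectSum.coeLinearMap _) internal
  let e2 : (DirectSum s (fun i => ↥(i : Submodule E E))) ≃ₗ[E] (∀ _ : s, ↥M) :=
    (DirectSum.linearEquivFunOnFintype E s _).trans (LinearEquiv.piCongrRight iso)
  let e3 : (∀ _ : s, ↥M) ≃ₗ[E] (Fin n → ↥M) :=
    LinearEquiv.piCongrLeft' E (fun _ => ↥M) (Fintype.equivFin s)
  let e : E ≃ₗ[E] (Fin n → ↥M) := e1.symm.trans (e2.trans e3)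
  -- the division ring of endomorphisms
  haveI : Finite (Module.End E ↥M) :=
    Finite.of_injective (fun f => (f : ↥M → ↥M)) DFunLike.coe_injective
  haveI : Finite (Module.End E ↥M)ᵐᵒᵖ := Finite.of_equiv _ MulOpposite.opEquiv
  letI : DivisionRing (Module.End E ↥M) := Module.End.instDivisionRing
  letI : Field (Module.End E ↥M)ᵐᵒᵖ := littleWedderburn _
  -- assemble the ring equivalence
  have r1 : E ≃+* (Module.End E E)ᵐᵒᵖ :=
    (RingEquiv.opOp E).trans (RingEquiv.op (RingEquiv.moduleEndSelf E))
  have r2 : (Module.End E E)ᵐᵒᵖ ≃+* (Module.End E (Fin n → ↥M))ᵐᵒᵖ :=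
    RingEquiv.op (wb_endCongr e)
  have r3 : (Module.End E (Fin n → ↥M))ᵐᵒᵖ ≃+* (Matrix (Fin n) (Fin n) (Module.End E ↥M))ᵐᵒᵖ :=
    RingEquiv.op (endVecRingEquivMatrixEnd (Fin n) E ↥M)
  have r4 : (Matrix (Fin n) (Fin n) (Module.End E ↥M))ᵐᵒᵖ ≃+*
      Matrix (Fin n) (Fin n) (Module.End E ↥M)ᵐᵒᵖ :=
    RingEquiv.mopMatrix.symm
  obtain ⟨F, hF, hFin, hne⟩ := wb_final n (r1.trans (r2.trans (r3.trans r4)))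
  exact ⟨n, F, hF, hFin, hn1, hne⟩
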